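/- For every permutation π of length n, the occurrence graph G_{12}(π) of the pattern 12 in π is a tree (non-empty, connected and acyclic) if and only if: π contains the pattern 12, π avoids the patterns 123, 1432, 2143 and 3214, and there do not exist indices i₁ < i₂ < i₃ < i₄ in {1,…,n} with π(i₃) < π(i₄) < π(i₁) < π(i₂), such that every index j < i₃ with j ∉ {i₁,i₂} satisfies π(j) > π(i₄) and every index j > i₃ with j ≠ i₄ satisfies π(j) < π(i₄). -/

import Mathlib

open Finset

/-- `s` is an occurrence (index set) of the pattern `p` in the permutation `π`:
`s` has `k` elements and, listed increasingly, `π` on `s` is order isomorphic to `p`. -/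
def IsOccurrence {k n : ℕ} (p : Equiv.Perm (Fin k)) (π : Equiv.Perm (Fin n))
    (s : Finset (Fin n)) : Prop :=
  ∃ h : s.card = k, ∀ a b : Fin k,
    π ↑(s.orderIsoOfFin h a) < π ↑(s.orderIsoOfFin h b) ↔ p a < p b

/-- The occurrence set `V_p(π)` of all occurrence index sets of `p` in `π`. -/
def OccSet {k n : ℕ} (p : Equiv.Perm (Fin k)) (π : Equiv.Perm (Fin n)) :
    Set (Finset (Fin n)) :=
  {s | IsOccurrence p π s}

/-- The occurrence graph `G_p(π)`: vertices are the occurrences of `p` in `π`,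
two occurrences adjacent iff they differ in exactly one element. -/
def OccGraph {k n : ℕ} (p : Equiv.Perm (Fin k)) (π : Equiv.Perm (Fin n)) :
    SimpleGraph {s : Finset (Fin n) // IsOccurrence p π s} where
  Adj u v := (u.val \ v.val).card = 1 ∧ (v.val \ u.val).card = 1
  symm := ⟨fun u v h => ⟨h.2, h.1⟩⟩
  loopless := ⟨fun u h => by simp at h⟩

/-- `σ` contains the pattern `π` (there is an occurrence of `π` in `σ`,
given by a strictly increasing index injection). -/
def PermContains {m n : ℕ} (σ : Equiv.Perm (Fin n)) (π : Equiv.Perm (Fin m)) : Prop :=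
  ∃ j : Fin m → Fin n, StrictMono j ∧ ∀ a b : Fin m, σ (j a) < σ (j b) ↔ π a < π b

/-- The permutation 1432 (0-indexed values). -/
def perm1432 : Equiv.Perm (Fin 4) := ⟨![0, 3, 2, 1], ![0, 3, 2, 1], by decide, by decide⟩

/-- The permutation 3214 (0-indexed values). -/
def perm3214 : Equiv.Perm (Fin 4) := ⟨![2, 1, 0, 3], ![2, 1, 0, 3], by decide, by decide⟩

/-- The permutation 2143 (0-indexed values). -/
def perm2143 : Equiv.Perm (Fin 4) := ⟨![1, 0, 3, 2], ![1, 0, 3, 2], by decide, by decide⟩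

/-- `π` has an occurrence of the mesh pattern `m` of Figure 5: an occurrence
`i₁ < i₂ < i₃ < i₄` of 3412 such that every other point strictly left of position `i₃`
has value above `π i₄`, and every point strictly right of `i₃` other than `i₄`
has value below `π i₄`. -/
def MeshOccurs {n : ℕ} (π : Equiv.Perm (Fin n)) : Prop :=
  ∃ i₁ i₂ i₃ i₄ : Fin n, i₁ < i₂ ∧ i₂ < i₃ ∧ i₃ < i₄ ∧
    π i₃ < π i₄ ∧ π i₄ < π i₁ ∧ π i₁ < π i₂ ∧
    (∀ j : Fin n, j < i₃ → j ≠ i₁ → j ≠ i₂ → π i₄ < π j) ∧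
    (∀ j : Fin n, i₃ < j → j ≠ i₄ → π j < π i₄)

section Dev
variable {n : ℕ} (π : Equiv.Perm (Fin n))

lemma pi_ne {a b : Fin n} (h : a ≠ b) : π a ≠ π b :=
  fun he => h (π.injective he)

lemma occ_iff {s : Finset (Fin n)} :
    IsOccurrence (Equiv.refl (Fin 2)) π s ↔
      ∃ i j : Fin n, i < j ∧ π i < π j ∧ s = {i, j} := by
  constructor
  · rintro ⟨h, hp⟩
    set e := s.orderIsoOfFin h with he
    have h01 : (e 0 : Fin n) < (e 1 : Fin n) := by
      have : (0 : Fin 2) < 1 := by decide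
      exact_mod_cast e.strictMono this
    refine ⟨e 0, e 1, h01, ?_, ?_⟩
    · have := (hp 0 1).mpr (by decide)
      simpa using this
    · apply Finset.eq_of_superset_of_card_ge
      · intro x hx
        simp only [Finset.mem_insert, Finset.mem_singleton] at hx
        rcases hx with rfl | rfl
        · exact (e 0).2
        · exact (e 1).2
      · rw [h]
        have : ({(e 0 : Fin n), (e 1 : Fin n)} : Finset (Fin n)).card = 2 := by
          rw [Finset.card_insert_of_notMem (by simpa using ne_of_lt h01),
            Finset.card_singleton]
        rw [this]
  · rintro ⟨i, j, hij, hv, rfl⟩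
    have hijne : i ≠ j := ne_of_lt hij
    have hcard : ({i, j} : Finset (Fin n)).card = 2 := by
      rw [Finset.card_insert_of_notMem (by simpa using hijne), Finset.card_singleton]
    refine ⟨hcard, ?_⟩
    set e := ({i, j} : Finset (Fin n)).orderIsoOfFin hcard with he
    have h01 : (e 0 : Fin n) < (e 1 : Fin n) := by
      have : (0 : Fin 2) < 1 := by decide
      exact_mod_cast e.strictMono this
    have hmem : ∀ a : Fin 2, (e a : Fin n) = i ∨ (e a : Fin n) = j := by
      intro a
      have h2 := (e a).2
      rw [Finset.mem_insert, Finset.mem_singleton] at h2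
      exact h2
    have he0 : (e 0 : Fin n) = i := by
      rcases hmem 0 with h0 | h0 <;> rcases hmem 1 with h1 | h1
      · exact h0
      · exact h0
      · exfalso; rw [h0, h1] at h01; exact absurd (h01.trans hij) (lt_irrefl _)
      · exfalso; rw [h0, h1] at h01; exact absurd h01 (lt_irrefl _)
    have he1 : (e 1 : Fin n) = j := by
      rcases hmem 1 with h1 | h1
      · exfalso; rw [he0, h1] at h01; exact absurd h01 (lt_irrefl _)
      · exact h1
    intro a b
    fin_cases a <;> fin_cases b <;>
      simp [he0, he1, hv, le_of_lt hv, lt_irrefl, asymm hv]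
end Dev
section Dev2
variable {n : ℕ} (π : Equiv.Perm (Fin n))

lemma has12_intro {i j : Fin n} (hij : i < j) (hv : π i < π j) :
    PermContains π (Equiv.refl (Fin 2)) := by
  refine ⟨![i, j], ?_, ?_⟩
  · intro a b hab
    fin_cases a <;> fin_cases b <;>
      first
        | exact absurd hab (by decide)
        | simpa using hij
  · intro a b
    fin_cases a <;> fin_cases b <;>
      simp [hv, le_of_lt hv, lt_irrefl, asymm hv]

lemma has123_intro {i j k : Fin n} (hij : i < j) (hjk : j < k)
    (v1 : π i < π j) (v2 : π j < π k) :
    PermContains π (Equiv.refl (Fin 3)) := by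
  have v3 : π i < π k := v1.trans v2
  refine ⟨![i, j, k], ?_, ?_⟩
  · intro a b hab
    fin_cases a <;> fin_cases b <;>
      first
        | exact absurd hab (by decide)
        | simpa using hij
        | simpa using hjk
        | simpa using hij.trans hjk
  · intro a b
    fin_cases a <;> fin_cases b <;>
      simp [v1, v2, v3, le_of_lt, lt_irrefl, asymm v1, asymm v2, asymm v3]

lemma has123_elim (h : PermContains π (Equiv.refl (Fin 3))) :
    ∃ i j k : Fin n, i < j ∧ j < k ∧ π i < π j ∧ π j < π k := by
  obtain ⟨f, hm, hp⟩ := h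
  exact ⟨f 0, f 1, f 2, hm (by decide), hm (by decide),
    (hp 0 1).mpr (by decide), (hp 1 2).mpr (by decide)⟩

lemma has1432_intro {i1 i2 i3 i4 : Fin n} (h12 : i1 < i2) (h23 : i2 < i3) (h34 : i3 < i4)
    (v1 : π i1 < π i4) (v2 : π i4 < π i3) (v3 : π i3 < π i2) :
    PermContains π perm1432 := by
  have w1 : π i1 < π i3 := v1.trans v2
  have w2 : π i1 < π i2 := w1.trans v3
  have w3 : π i4 < π i2 := v2.trans v3
  refine ⟨![i1, i2, i3, i4], ?_, ?_⟩
  · intro a b hab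
    fin_cases a <;> fin_cases b <;>
      first
        | exact absurd hab (by decide)
        | simpa using h12
        | simpa using h23
        | simpa using h34
        | simpa using h12.trans h23
        | simpa using h23.trans h34
        | simpa using (h12.trans h23).trans h34
  · intro a b
    fin_cases a <;> fin_cases b <;>
      simp [perm1432, v1, v2, v3, w1, w2, w3, le_of_lt, lt_irrefl,
        asymm v1, asymm v2, asymm v3, asymm w1, asymm w2, asymm w3]

lemma has1432_elim (h : PermContains π perm1432) :
    ∃ i1 i2 i3 i4 : Fin n, i1 < i2 ∧ i2 < i3 ∧ i3 < i4 ∧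
      π i1 < π i4 ∧ π i4 < π i3 ∧ π i3 < π i2 := by
  obtain ⟨f, hm, hp⟩ := h
  exact ⟨f 0, f 1, f 2, f 3, hm (by decide), hm (by decide), hm (by decide),
    (hp 0 3).mpr (by decide), (hp 3 2).mpr (by decide), (hp 2 1).mpr (by decide)⟩

lemma has2143_intro {i1 i2 i3 i4 : Fin n} (h12 : i1 < i2) (h23 : i2 < i3) (h34 : i3 < i4)
    (v1 : π i2 < π i1) (v2 : π i1 < π i4) (v3 : π i4 < π i3) :
    PermContains π perm2143 := by
  have w1 : π i2 < π i4 := v1.trans v2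
  have w2 : π i1 < π i3 := v2.trans v3
  have w3 : π i2 < π i3 := v1.trans w2
  refine ⟨![i1, i2, i3, i4], ?_, ?_⟩
  · intro a b hab
    fin_cases a <;> fin_cases b <;>
      first
        | exact absurd hab (by decide)
        | simpa using h12
        | simpa using h23
        | simpa using h34
        | simpa using h12.trans h23
        | simpa using h23.trans h34
        | simpa using (h12.trans h23).trans h34
  · intro a b
    fin_cases a <;> fin_cases b <;>
      simp [perm2143, v1, v2, v3, w1, w2, w3, le_of_lt, lt_irrefl,
        asymm v1, asymm v2, asymm v3, asymm w1, asymm w2, asymm w3]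

lemma has2143_elim (h : PermContains π perm2143) :
    ∃ i1 i2 i3 i4 : Fin n, i1 < i2 ∧ i2 < i3 ∧ i3 < i4 ∧
      π i2 < π i1 ∧ π i1 < π i4 ∧ π i4 < π i3 := by
  obtain ⟨f, hm, hp⟩ := h
  exact ⟨f 0, f 1, f 2, f 3, hm (by decide), hm (by decide), hm (by decide),
    (hp 1 0).mpr (by decide), (hp 0 3).mpr (by decide), (hp 3 2).mpr (by decide)⟩

lemma has3214_intro {i1 i2 i3 i4 : Fin n} (h12 : i1 < i2) (h23 : i2 < i3) (h34 : i3 < i4)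
    (v1 : π i3 < π i2) (v2 : π i2 < π i1) (v3 : π i1 < π i4) :
    PermContains π perm3214 := by
  have w1 : π i3 < π i1 := v1.trans v2
  have w2 : π i2 < π i4 := v2.trans v3
  have w3 : π i3 < π i4 := w1.trans v3
  refine ⟨![i1, i2, i3, i4], ?_, ?_⟩
  · intro a b hab
    fin_cases a <;> fin_cases b <;>
      first
        | exact absurd hab (by decide)
        | simpa using h12
        | simpa using h23
        | simpa using h34
        | simpa using h12.trans h23
        | simpa using h23.trans h34
        | simpa using (h12.trans h23).trans h34
  · intro a b
    fin_cases a <;> fin_cases b <;>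
      simp [perm3214, v1, v2, v3, w1, w2, w3, le_of_lt, lt_irrefl,
        asymm v1, asymm v2, asymm v3, asymm w1, asymm w2, asymm w3]

lemma has3214_elim (h : PermContains π perm3214) :
    ∃ i1 i2 i3 i4 : Fin n, i1 < i2 ∧ i2 < i3 ∧ i3 < i4 ∧
      π i3 < π i2 ∧ π i2 < π i1 ∧ π i1 < π i4 := by
  obtain ⟨f, hm, hp⟩ := h
  exact ⟨f 0, f 1, f 2, f 3, hm (by decide), hm (by decide), hm (by decide),
    (hp 2 1).mpr (by decide), (hp 1 0).mpr (by decide), (hp 0 3).mpr (by decide)⟩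

lemma has12_elim (h : PermContains π (Equiv.refl (Fin 2))) :
    ∃ i j : Fin n, i < j ∧ π i < π j := by
  obtain ⟨f, hm, hp⟩ := h
  exact ⟨f 0, f 1, hm (by decide), (hp 0 1).mpr (by decide)⟩

end Dev2
section Dev3
open SimpleGraph
variable {n : ℕ} (π : Equiv.Perm (Fin n))

/-- Vertex constructor. -/
def mkV {i j : Fin n} (hij : i < j) (hv : π i < π j) :
    {s : Finset (Fin n) // IsOccurrence (Equiv.refl (Fin 2)) π s} :=
  ⟨{i, j}, (occ_iff π).mpr ⟨i, j, hij, hv, rfl⟩⟩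

@[simp] lemma mkV_val {i j : Fin n} (hij : i < j) (hv : π i < π j) :
    (mkV π hij hv).val = {i, j} := rfl

lemma pair_sdiff {i j k : Fin n} (hji : j ≠ i) (hjk : j ≠ k) :
    ({i, j} : Finset (Fin n)) \ {i, k} = {j} := by
  ext x
  simp only [Finset.mem_sdiff, Finset.mem_insert, Finset.mem_singleton]
  constructor
  · rintro ⟨h1 | h1, h2⟩
    · exact absurd (Or.inl h1) h2
    · exact h1
  · rintro rfl
    exact ⟨Or.inr rfl, by rintro (rfl | rfl) <;> [exact hji rfl; exact hjk rfl]⟩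

/-- Adjacency via a shared element `x`. -/
lemma adj_of {x a b : Fin n}
    {u v : {s : Finset (Fin n) // IsOccurrence (Equiv.refl (Fin 2)) π s}}
    (hu : u.val = {x, a}) (hv : v.val = {x, b})
    (hax : a ≠ x) (hbx : b ≠ x) (hab : a ≠ b) :
    (OccGraph (Equiv.refl (Fin 2)) π).Adj u v := by
  constructor
  · rw [hu, hv, pair_sdiff hax hab, Finset.card_singleton]
  · rw [hu, hv, pair_sdiff hbx hab.symm, Finset.card_singleton]

lemma occ_card {s : Finset (Fin n)} (h : IsOccurrence (Equiv.refl (Fin 2)) π s) :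
    s.card = 2 := h.1

/-- From adjacency: the two occurrence sets share an element. -/
lemma adj_shared {u v : {s : Finset (Fin n) // IsOccurrence (Equiv.refl (Fin 2)) π s}}
    (h : (OccGraph (Equiv.refl (Fin 2)) π).Adj u v) :
    ∃ x : Fin n, x ∈ u.val ∧ x ∈ v.val := by
  have h1 : (u.val \ v.val).card = 1 := h.1
  have hcard : u.val.card = 2 := occ_card π u.2
  have h2 : (u.val ∩ v.val).card = 1 := by
    have := Finset.card_sdiff_add_card_inter u.val v.val
    omega
  obtain ⟨x, hx⟩ := Finset.card_pos.mp (by omega : 0 < (u.val ∩ v.val).card)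
  rw [Finset.mem_inter] at hx
  exact ⟨x, hx.1, hx.2⟩

lemma ne_of_val_pairs {u v : {s : Finset (Fin n) // IsOccurrence (Equiv.refl (Fin 2)) π s}}
    {a b c d : Fin n} (hu : u.val = {a, b}) (hv : v.val = {c, d})
    (hb : b ≠ c) (hb' : b ≠ d) : u ≠ v := by
  intro he
  rw [he, hv] at hu
  have : b ∈ ({c, d} : Finset (Fin n)) := by
    rw [hu]; simp
  simp only [Finset.mem_insert, Finset.mem_singleton] at this
  rcases this with rfl | rfl
  · exact hb rfl
  · exact hb' rfl

lemma not_acyclic_triangle {V' : Type*} {G' : SimpleGraph V'} {a b c : V'}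
    (hab : G'.Adj a b) (hbc : G'.Adj b c) (hca : G'.Adj c a) : ¬ G'.IsAcyclic := by
  intro h
  have hac : a ≠ c := hca.ne'
  exact h (Walk.cons hab (Walk.cons hbc (Walk.cons hca Walk.nil)))
    (by
      simp [Walk.isCycle_def, Walk.isTrail_def, hab.ne, hbc.ne, hac,
        Sym2.eq_iff, List.Nodup]
      exact ⟨hab.ne', hca.ne⟩)

lemma not_acyclic_square {V' : Type*} {G' : SimpleGraph V'} {a b c d : V'}
    (hab : G'.Adj a b) (hbc : G'.Adj b c) (hcd : G'.Adj c d) (hda : G'.Adj d a)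
    (hac : a ≠ c) (hbd : b ≠ d) : ¬ G'.IsAcyclic := by
  intro h
  exact h (Walk.cons hab (Walk.cons hbc (Walk.cons hcd (Walk.cons hda Walk.nil))))
    (by
      simp [Walk.isCycle_def, Walk.isTrail_def, hab.ne, hbc.ne, hcd.ne, hda.ne,
        hac, hbd, hda.ne', Sym2.eq_iff, List.Nodup]
      exact ⟨hac.symm, hab.ne', hac.symm⟩)

end Dev3
section Dev4
open SimpleGraph
variable {n : ℕ} (π : Equiv.Perm (Fin n))

/-- The vertex type of the occurrence graph of the pattern 12. -/
abbrev Vtx (π : Equiv.Perm (Fin n)) := {s : Finset (Fin n) // IsOccurrence (Equiv.refl (Fin 2)) π s}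

lemma vert_rep (o : Vtx π) : ∃ i j : Fin n, i < j ∧ π i < π j ∧ o.val = {i, j} :=
  (occ_iff π).mp o.2

lemma vert_nonempty (o : Vtx π) : o.val.Nonempty := by
  obtain ⟨i, j, _, _, h⟩ := vert_rep π o
  exact ⟨i, by simp [h]⟩

lemma min'_pair {i j : Fin n} (s : Finset (Fin n)) (hs : s.Nonempty)
    (hrep : s = {i, j}) (hij : i < j) : s.min' hs = i := by
  subst hrep
  refine le_antisymm (Finset.min'_le _ _ (by simp)) (Finset.le_min' _ _ _ ?_)
  intro y hy
  simp only [Finset.mem_insert, Finset.mem_singleton] at hy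
  rcases hy with rfl | rfl
  · exact le_refl _
  · exact le_of_lt hij

lemma max'_pair {i j : Fin n} (s : Finset (Fin n)) (hs : s.Nonempty)
    (hrep : s = {i, j}) (hij : i < j) : s.max' hs = j := by
  subst hrep
  refine le_antisymm (Finset.max'_le _ _ _ ?_) (Finset.le_max' _ _ (by simp))
  intro y hy
  simp only [Finset.mem_insert, Finset.mem_singleton] at hy
  rcases hy with rfl | rfl
  · exact le_of_lt hij
  · exact le_refl _

lemma mul_add_lt_iff {N a b c d : ℕ} (hb : b < N) (hd : d < N) :
    N * a + b < N * c + d ↔ a < c ∨ (a = c ∧ b < d) := by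
  rcases Nat.lt_trichotomy a c with h | h | h
  · have h2 : N * (a + 1) ≤ N * c := Nat.mul_le_mul_left N h
    have h3 : N * (a + 1) = N * a + N := by ring
    constructor
    · intro _; exact Or.inl h
    · intro _; omega
  · subst h
    constructor
    · intro hlt; exact Or.inr ⟨rfl, by omega⟩
    · rintro (h | ⟨-, h⟩)
      · omega
      · omega
  · have h2 : N * (c + 1) ≤ N * a := Nat.mul_le_mul_left N h
    have h3 : N * (c + 1) = N * c + N := by ring
    constructor
    · intro hlt; omega
    · rintro (h' | ⟨h', -⟩)
      · omega
      · omega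

lemma mul_add_inj {N a b c d : ℕ} (hb : b < N) (hd : d < N)
    (h : N * a + b = N * c + d) : a = c ∧ b = d := by
  rcases Nat.lt_trichotomy a c with h' | h' | h'
  · have h2 : N * (a + 1) ≤ N * c := Nat.mul_le_mul_left N h'
    have h3 : N * (a + 1) = N * a + N := by ring
    omega
  · subst h'; omega
  · have h2 : N * (c + 1) ≤ N * a := Nat.mul_le_mul_left N h'
    have h3 : N * (c + 1) = N * c + N := by ring
    omega

/-- Lex encoding of an occurrence. -/
noncomputable def phi (o : Vtx π) : ℕ :=
  n * (o.val.min' (vert_nonempty π o)).val + (o.val.max' (vert_nonempty π o)).val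

lemma phi_eq {i j : Fin n} (o : Vtx π) (hij : i < j) (ho : o.val = {i, j}) :
    phi π o = n * i.val + j.val := by
  unfold phi
  rw [min'_pair _ _ ho hij, max'_pair _ _ ho hij]

lemma phi_lt_iff {i j k l : Fin n} {o p : Vtx π}
    (hij : i < j) (hkl : k < l) (ho : o.val = {i, j}) (hp : p.val = {k, l}) :
    phi π o < phi π p ↔ (i < k ∨ (i = k ∧ j < l)) := by
  rw [phi_eq π o hij ho, phi_eq π p hkl hp]
  have h1 : j.val < n := j.isLt
  have h2 : l.val < n := l.isLt
  rw [Fin.lt_def, Fin.lt_def, Fin.ext_iff, mul_add_lt_iff h1 h2]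

lemma phi_inj {o p : Vtx π} (h : phi π o = phi π p) : o = p := by
  obtain ⟨i, j, hij, _, ho⟩ := vert_rep π o
  obtain ⟨k, l, hkl, _, hp⟩ := vert_rep π p
  rw [phi_eq π o hij ho, phi_eq π p hkl hp] at h
  have h1 : j.val < n := j.isLt
  have h2 : l.val < n := l.isLt
  obtain ⟨e1, e2⟩ := mul_add_inj h1 h2 h
  have hik : i = k := Fin.ext e1
  have hjl : j = l := Fin.ext e2
  apply Subtype.ext
  rw [ho, hp, hik, hjl]

end Dev4
section Dev5
open SimpleGraph
variable {n : ℕ} (π : Equiv.Perm (Fin n))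

lemma adj_not_between
    (h123 : ¬ PermContains π (Equiv.refl (Fin 3)))
    (h1432 : ¬ PermContains π perm1432)
    (h2143 : ¬ PermContains π perm2143)
    (h3214 : ¬ PermContains π perm3214)
    {u v w : Vtx π} (huv : (OccGraph (Equiv.refl (Fin 2)) π).Adj u v)
    (hph1 : phi π u < phi π w) (hph2 : phi π w < phi π v) : False := by
  obtain ⟨s, t, hst, hvst, hu⟩ := vert_rep π u
  obtain ⟨p, q, hpq, hvpq, hv⟩ := vert_rep π v
  obtain ⟨x, y, hxy, hvxy, hw⟩ := vert_rep π w
  have lex1 : s < x ∨ (s = x ∧ t < y) := (phi_lt_iff π hst hxy hu hw).mp hph1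
  have lex2 : x < p ∨ (x = p ∧ y < q) := (phi_lt_iff π hxy hpq hw hv).mp hph2
  have lexuv : s < p ∨ (s = p ∧ t < q) :=
    (phi_lt_iff π hst hpq hu hv).mp (hph1.trans hph2)
  obtain ⟨z, hz1, hz2⟩ := adj_shared π huv
  rw [hu] at hz1
  rw [hv] at hz2
  simp only [Finset.mem_insert, Finset.mem_singleton] at hz1 hz2
  have hshared : s = p ∨ s = q ∨ t = p ∨ t = q := by
    rcases hz1 with rfl | rfl <;> rcases hz2 with rfl | rfl <;> tauto
  clear hz1 hz2
  rcases hshared with he | he | he | he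
  · subst he
    -- s = p : common source
    have htq : t < q := by
      rcases lexuv with h | ⟨-, h⟩
      · exact absurd h (lt_irrefl _)
      · exact h
    have hexs : s = x := by
      rcases lex1 with hsx | ⟨h, -⟩
      · rcases lex2 with hxs | ⟨h, -⟩
        · exact absurd (hsx.trans hxs) (lt_irrefl _)
        · exact absurd (h ▸ hsx) (lt_irrefl _)
      · exact h
    subst hexs
    have hty : t < y := by
      rcases lex1 with hsx | ⟨-, h⟩
      · exact absurd hsx (lt_irrefl _)
      · exact h
    have hyq : y < q := by
      rcases lex2 with hxs | ⟨-, h⟩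
      · exact absurd hxs (lt_irrefl _)
      · exact h
    rcases lt_or_gt_of_ne (pi_ne π (ne_of_lt hty)) with h1 | h1
    · exact h123 (has123_intro π hst hty hvst h1)
    · rcases lt_or_gt_of_ne (pi_ne π (ne_of_lt hyq)) with h2 | h2
      · exact h123 (has123_intro π hxy hyq hvxy h2)
      · exact h1432 (has1432_intro π hst hty hyq hvpq h2 h1)
  · subst he
    -- s = q : impossible by lex order
    rcases lexuv with h | ⟨he', -⟩
    · exact absurd h (asymm hpq)
    · rw [he'] at hpq; exact lt_irrefl _ hpq
  · subst he
    -- t = p : 123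
    exact h123 (has123_intro π hst hpq hvst hvpq)
  · subst he
    -- t = q : common sink
    have hsp : s < p := by
      rcases lexuv with h | ⟨-, h⟩
      · exact h
      · exact absurd h (lt_irrefl _)
    rcases lt_or_gt_of_ne (pi_ne π (ne_of_lt hsp)) with hps | hps
    · exact h123 (has123_intro π hsp hpq hps hvpq)
    · -- π p < π s
      rcases lex1 with hsx | ⟨hesx, hty⟩
      · -- s < x
        rcases lex2 with hxp | ⟨hexp, hyt⟩
        · -- x < p
          rcases lt_trichotomy y t with hyt | heyt | hty
          · rcases lt_or_gt_of_ne (pi_ne π (ne_of_lt hyt)) with h1 | h1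
            · exact h123 (has123_intro π hxy hyt hvxy h1)
            · rcases lt_or_gt_of_ne (pi_ne π (ne_of_lt hsx)) with h2 | h2
              · exact h123 (has123_intro π hsx hxy h2 hvxy)
              · exact h2143 (has2143_intro π hsx hxy hyt h2 hvst h1)
          · subst heyt
            rcases lt_or_gt_of_ne (pi_ne π (ne_of_lt hsx)) with h2 | h2
            · exact h123 (has123_intro π hsx hxy h2 hvxy)
            · rcases lt_or_gt_of_ne (pi_ne π (ne_of_lt hxp)) with h3 | h3
              · exact h123 (has123_intro π hxp hpq h3 hvpq)
              · exact h3214 (has3214_intro π hsx hxp hpq h3 h2 hvst)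
          · rcases lt_or_gt_of_ne (pi_ne π (ne_of_lt hty)) with h1 | h1
            · exact h123 (has123_intro π hst hty hvst h1)
            · rcases lt_or_gt_of_ne (pi_ne π (ne_of_lt hsx)) with h2 | h2
              · exact h123 (has123_intro π hsx hxy h2 hvxy)
              · rcases lt_or_gt_of_ne (pi_ne π (ne_of_lt (hsx.trans hxy))) with h3 | h3
                · exact h2143 (has2143_intro π hsx (hxp.trans hpq) hty h2 h3 h1)
                · rcases lt_or_gt_of_ne (pi_ne π (ne_of_lt hxp)) with h4 | h4
                  · exact h123 (has123_intro π hxp hpq h4 hvpq)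
                  · exact h2143 (has2143_intro π hxp hpq hty h4 hvxy h1)
        · -- x = p, y < t
          subst hexp
          rcases lt_or_gt_of_ne (pi_ne π (ne_of_lt hyt)) with h1 | h1
          · exact h123 (has123_intro π hxy hyt hvxy h1)
          · exact h2143 (has2143_intro π hsx hxy hyt hps hvst h1)
      · -- s = x, t < y
        subst hesx
        rcases lt_or_gt_of_ne (pi_ne π (ne_of_lt hty)) with h1 | h1
        · exact h123 (has123_intro π hst hty hvst h1)
        · exact h2143 (has2143_intro π hsp hpq hty hps hvxy h1)

end Dev5
section Dev6
open SimpleGraph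
variable {n : ℕ} (π : Equiv.Perm (Fin n))

noncomputable instance : Fintype (Vtx π) :=
  Fintype.ofInjective Subtype.val Subtype.val_injective

/-- Rank of an occurrence in the lex order. -/
noncomputable def rnk (o : Vtx π) : ℕ :=
  (Finset.univ.filter (fun w : Vtx π => phi π w < phi π o)).card

lemma rnk_lt {o p : Vtx π} (h : phi π o < phi π p) : rnk π o < rnk π p := by
  apply Finset.card_lt_card
  constructor
  · intro w hw
    simp only [Finset.mem_filter, Finset.mem_univ, true_and] at hw ⊢
    exact hw.trans h
  · intro hsub
    have ho : o ∈ Finset.univ.filter (fun w : Vtx π => phi π w < phi π p) := by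
      simp [h]
    have := hsub ho
    simp only [Finset.mem_filter, Finset.mem_univ, true_and] at this
    exact lt_irrefl _ this

lemma rnk_inj {o p : Vtx π} (h : rnk π o = rnk π p) : o = p := by
  rcases lt_trichotomy (phi π o) (phi π p) with h' | h' | h'
  · exact absurd h (ne_of_lt (rnk_lt π h'))
  · exact phi_inj π h'
  · exact absurd h.symm (ne_of_lt (rnk_lt π h'))

lemma adj_rnk
    (h123 : ¬ PermContains π (Equiv.refl (Fin 3)))
    (h1432 : ¬ PermContains π perm1432)
    (h2143 : ¬ PermContains π perm2143)
    (h3214 : ¬ PermContains π perm3214)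
    {u v : Vtx π} (huv : (OccGraph (Equiv.refl (Fin 2)) π).Adj u v) :
    rnk π u + 1 = rnk π v ∨ rnk π v + 1 = rnk π u := by
  have hne : u ≠ v := huv.ne
  have key : ∀ a b : Vtx π, (OccGraph (Equiv.refl (Fin 2)) π).Adj a b →
      phi π a < phi π b → rnk π a + 1 = rnk π b := by
    intro a b hab hphab
    have hset : Finset.univ.filter (fun w : Vtx π => phi π w < phi π b)
        = insert a (Finset.univ.filter (fun w : Vtx π => phi π w < phi π a)) := by
      ext w
      simp only [Finset.mem_filter, Finset.mem_univ, true_and, Finset.mem_insert]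
      constructor
      · intro hw
        rcases lt_trichotomy (phi π w) (phi π a) with h' | h' | h'
        · exact Or.inr h'
        · exact Or.inl (phi_inj π h')
        · exact absurd (adj_not_between π h123 h1432 h2143 h3214 hab h' hw) id
      · rintro (rfl | hw)
        · exact hphab
        · exact hw.trans hphab
    have hnotmem : a ∉ Finset.univ.filter (fun w : Vtx π => phi π w < phi π a) := by
      simp
    unfold rnk
    rw [hset, Finset.card_insert_of_notMem hnotmem]
  have hphne : phi π u ≠ phi π v := fun h => hne (phi_inj π h)
  rcases lt_or_gt_of_ne hphne with h | h
  · exact Or.inl (key u v huv h)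
  · exact Or.inr (key v u huv.symm h)

lemma walk_cross
    (h123 : ¬ PermContains π (Equiv.refl (Fin 3)))
    (h1432 : ¬ PermContains π perm1432)
    (h2143 : ¬ PermContains π perm2143)
    (h3214 : ¬ PermContains π perm3214)
    {u v : Vtx π} (huv : (OccGraph (Equiv.refl (Fin 2)) π).Adj u v)
    (hr : rnk π u + 1 = rnk π v) :
    ∀ {x y : Vtx π} (p : (OccGraph (Equiv.refl (Fin 2)) π).Walk x y),
      rnk π x ≤ rnk π u → rnk π v ≤ rnk π y → s(u, v) ∈ p.edges := by
  intro x y p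
  induction p with
  | nil =>
    intro h1 h2
    omega
  | @cons a c d hadj q ih =>
    intro h1 h2
    rcases adj_rnk π h123 h1432 h2143 h3214 hadj with hc | hc
    · by_cases hcu : rnk π c ≤ rnk π u
      · exact List.mem_cons_of_mem _ (ih hcu h2)
      · have hxu : rnk π a = rnk π u := by omega
        have hcv : rnk π c = rnk π v := by omega
        have e1 : a = u := rnk_inj π hxu
        have e2 : c = v := rnk_inj π hcv
        subst e1; subst e2
        simp [Walk.edges_cons]
    · by_cases hcu : rnk π c ≤ rnk π u
      · exact List.mem_cons_of_mem _ (ih hcu h2)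
      · omega

theorem occ_acyclic
    (h123 : ¬ PermContains π (Equiv.refl (Fin 3)))
    (h1432 : ¬ PermContains π perm1432)
    (h2143 : ¬ PermContains π perm2143)
    (h3214 : ¬ PermContains π perm3214) :
    (OccGraph (Equiv.refl (Fin 2)) π).IsAcyclic := by
  rw [isAcyclic_iff_forall_adj_isBridge]
  intro u v huv
  rw [isBridge_iff_adj_and_forall_walk_mem_edges]
  refine fun p => ?_
  rcases adj_rnk π h123 h1432 h2143 h3214 huv with hr | hr
  · exact walk_cross π h123 h1432 h2143 h3214 huv hr p (le_refl _) (le_refl _)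
  · have := walk_cross π h123 h1432 h2143 h3214 huv.symm hr
      p.reverse (le_refl _) (le_refl _)
    rw [Walk.edges_reverse, List.mem_reverse] at this
    rwa [Sym2.eq_swap] at this
end Dev6
section Dev7
open SimpleGraph
variable {n : ℕ} (π : Equiv.Perm (Fin n))

lemma unreach_ne {u v : Vtx π} {a b c d : Fin n}
    (hu : u.val = {a, b}) (hv : v.val = {c, d}) (hab : a < b) (hcd : c < d)
    (hnr : ¬ (OccGraph (Equiv.refl (Fin 2)) π).Reachable u v) :
    a ≠ c ∧ a ≠ d ∧ b ≠ c ∧ b ≠ d := by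
  have heq_case : u.val = v.val → False := by
    intro h
    exact hnr (by rw [show u = v from Subtype.ext h])
  refine ⟨?_, ?_, ?_, ?_⟩ <;> intro he
  · -- a = c
    subst he
    by_cases hbd : b = d
    · subst hbd; exact heq_case (by rw [hu, hv])
    · exact hnr ((adj_of π hu hv (ne_of_gt hab) (ne_of_gt hcd) hbd).reachable)
  · -- a = d
    subst he
    have hv' : v.val = {a, c} := by rw [hv, Finset.pair_comm]
    exact hnr ((adj_of π hu hv' (ne_of_gt hab) (ne_of_lt hcd)
      (ne_of_gt (hcd.trans hab))).reachable)
  · -- b = c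
    subst he
    have hu' : u.val = {b, a} := by rw [hu, Finset.pair_comm]
    exact hnr ((adj_of π hu' hv (ne_of_lt hab) (ne_of_gt hcd)
      (ne_of_lt (hab.trans hcd))).reachable)
  · -- b = d
    subst he
    by_cases hac : a = c
    · subst hac; exact heq_case (by rw [hu, hv])
    · have hu' : u.val = {b, a} := by rw [hu, Finset.pair_comm]
      have hv' : v.val = {b, c} := by rw [hv, Finset.pair_comm]
      exact hnr ((adj_of π hu' hv' (ne_of_lt hab) (ne_of_lt hcd) hac).reachable)

lemma quad_of_unreachable
    (h123 : ¬ PermContains π (Equiv.refl (Fin 3)))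
    (h2143 : ¬ PermContains π perm2143)
    {u v : Vtx π} {a b c d : Fin n}
    (hu : u.val = {a, b}) (hv : v.val = {c, d}) (hab : a < b) (hcd : c < d)
    (hvab : π a < π b) (hvcd : π c < π d) (hac : a < c)
    (hnr : ¬ (OccGraph (Equiv.refl (Fin 2)) π).Reachable u v) :
    b < c ∧ π d < π a := by
  obtain ⟨hne1, hne2, hne3, hne4⟩ := unreach_ne π hu hv hab hcd hnr
  rcases lt_trichotomy b c with hbc | hbc | hbc
  · -- side by side
    refine ⟨hbc, ?_⟩
    rcases lt_or_gt_of_ne (pi_ne π (ne_of_lt hbc)) with h1 | h1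
    · exact absurd (has123_intro π hab hbc hvab h1) h123
    rcases lt_or_gt_of_ne (pi_ne π (ne_of_lt (hbc.trans hcd))) with h2 | h2
    · exact absurd (has123_intro π hab (hbc.trans hcd) hvab h2) h123
    rcases lt_or_gt_of_ne (pi_ne π (ne_of_lt hac)) with h3 | h3
    · exact absurd (has123_intro π hac hcd h3 hvcd) h123
    rcases lt_or_gt_of_ne (pi_ne π (ne_of_lt (hac.trans hcd))) with h4 | h4
    · -- bridge (a, d)
      exfalso
      have had1 : (OccGraph (Equiv.refl (Fin 2)) π).Adj u (mkV π (hac.trans hcd) h4) :=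
        adj_of π hu rfl (ne_of_gt hab) (ne_of_gt (hac.trans hcd)) hne4
      have hw' : (mkV π (hac.trans hcd) h4).val = {d, a} := by
        rw [mkV_val, Finset.pair_comm]
      have hv' : v.val = {d, c} := by rw [hv, Finset.pair_comm]
      have had2 : (OccGraph (Equiv.refl (Fin 2)) π).Adj (mkV π (hac.trans hcd) h4) v :=
        adj_of π hw' hv' hne2 (ne_of_lt hcd) hne1
      exact hnr (had1.reachable.trans had2.reachable)
    · exact h4
  · exact absurd hbc hne3
  · -- c < b
    exfalso
    rcases lt_trichotomy d b with hdb | hdb | hdb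
    · -- nested : a < c < d < b
      rcases lt_or_gt_of_ne (pi_ne π (ne_of_lt hac)) with h1 | h1
      · exact h123 (has123_intro π hac hcd h1 hvcd)
      rcases lt_or_gt_of_ne (pi_ne π (ne_of_lt hdb)) with h2 | h2
      · exact h123 (has123_intro π hcd hdb hvcd h2)
      exact h2143 (has2143_intro π hac hcd hdb h1 hvab h2)
    · exact hne4 hdb.symm
    · -- crossing : a < c < b < d
      rcases lt_or_gt_of_ne (pi_ne π (ne_of_lt hac)) with h1 | h1
      · rcases lt_or_gt_of_ne (pi_ne π (ne_of_gt hbc)) with h2 | h2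
        · exact h123 (has123_intro π hab hdb hvab (h2.trans hvcd))
        · exact h123 (has123_intro π hac hbc h1 h2)
      rcases lt_or_gt_of_ne (pi_ne π (ne_of_gt hdb)) with h2 | h2
      · rcases lt_or_gt_of_ne (pi_ne π (ne_of_lt (hac.trans hcd))) with h3 | h3
        · exact h2143 (has2143_intro π hac hbc hdb h1 h3 h2)
        · -- bridge (c, b)
          have hvcb : π c < π b := h1.trans hvab
          have hu' : u.val = {b, a} := by rw [hu, Finset.pair_comm]
          have hw' : (mkV π hbc hvcb).val = {b, c} := by
            rw [mkV_val, Finset.pair_comm]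
          have had1 : (OccGraph (Equiv.refl (Fin 2)) π).Adj u (mkV π hbc hvcb) :=
            adj_of π hu' hw' (ne_of_lt hab) (ne_of_lt hbc) (ne_of_lt hac)
          have had2 : (OccGraph (Equiv.refl (Fin 2)) π).Adj (mkV π hbc hvcb) v :=
            adj_of π rfl hv (ne_of_gt hbc) (ne_of_gt hcd) (ne_of_lt hdb)
          exact hnr (had1.reachable.trans had2.reachable)
      · exact h123 (has123_intro π hab hdb hvab h2)

end Dev7
section Dev8
open SimpleGraph
variable {n : ℕ} (π : Equiv.Perm (Fin n))

lemma no_bad_quad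
    (h123 : ¬ PermContains π (Equiv.refl (Fin 3)))
    (h2143 : ¬ PermContains π perm2143)
    (hmesh : ¬ MeshOccurs π)
    {u0 v0 : Vtx π} {a0 b0 c0 d0 : Fin n}
    (hab0 : a0 < b0) (hbc0 : b0 < c0) (hcd0 : c0 < d0)
    (hvcd0 : π c0 < π d0) (hvda0 : π d0 < π a0) (hvab0 : π a0 < π b0)
    (hu0 : u0.val = {a0, b0}) (hv0 : v0.val = {c0, d0})
    (hnr0 : ¬ (OccGraph (Equiv.refl (Fin 2)) π).Reachable u0 v0) : False := by
  classical
  have hn : 0 < n := a0.pos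
  set Bad : Finset (Fin n × Fin n × Fin n × Fin n) :=
    Finset.univ.filter (fun z : Fin n × Fin n × Fin n × Fin n =>
      z.1 < z.2.1 ∧ z.2.1 < z.2.2.1 ∧ z.2.2.1 < z.2.2.2 ∧
      π z.2.2.1 < π z.2.2.2 ∧ π z.2.2.2 < π z.1 ∧ π z.1 < π z.2.1 ∧
      ∃ u v : Vtx π, u.val = {z.1, z.2.1} ∧ v.val = {z.2.2.1, z.2.2.2} ∧
        ¬ (OccGraph (Equiv.refl (Fin 2)) π).Reachable u v) with hBad
  have hne : Bad.Nonempty := by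
    refine ⟨(a0, b0, c0, d0), Finset.mem_filter.mpr ⟨Finset.mem_univ _, ?_⟩⟩
    exact ⟨hab0, hbc0, hcd0, hvcd0, hvda0, hvab0, u0, v0, hu0, hv0, hnr0⟩
  obtain ⟨z, hzmem, hzmin⟩ := Finset.exists_min_image Bad
    (fun z => (n - (π z.2.2.2).val) * n + z.2.2.1.val) hne
  obtain ⟨a, b, c, d⟩ := z
  obtain ⟨-, hab, hbc, hcd, hvcd, hvda, hvab, u, v, hu, hv, hnr⟩ :=
    Finset.mem_filter.mp hzmem
  have hnshade : ¬ ((∀ j : Fin n, j < c → j ≠ a → j ≠ b → π d < π j) ∧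
      (∀ j : Fin n, c < j → j ≠ d → π j < π d)) := by
    rintro ⟨s1, s2⟩
    exact hmesh ⟨a, b, c, d, hab, hbc, hcd, hvcd, hvda, hvab, s1, s2⟩
  rw [not_and_or] at hnshade
  rcases hnshade with hs | hs
  · -- left violation : ∃ j < c, j ∉ {a,b}, π j < π d
    push_neg at hs
    obtain ⟨j, hjc, hja, hjb, hjdle⟩ := hs
    have hjltd : j < d := hjc.trans hcd
    have hjd' : π j < π d := lt_of_le_of_ne hjdle (pi_ne π (ne_of_lt hjltd))
    have hw2v : (OccGraph (Equiv.refl (Fin 2)) π).Adj (mkV π hjltd hjd') v := by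
      have hw2' : (mkV π hjltd hjd').val = {d, j} := by rw [mkV_val, Finset.pair_comm]
      have hv' : v.val = {d, c} := by rw [hv, Finset.pair_comm]
      exact adj_of π hw2' hv' (ne_of_lt hjltd) (ne_of_lt hcd) (ne_of_lt hjc)
    have hnr2 : ¬ (OccGraph (Equiv.refl (Fin 2)) π).Reachable u (mkV π hjltd hjd') :=
      fun h => hnr (h.trans hw2v.reachable)
    rcases lt_trichotomy j a with hja' | hja' | hja'
    · -- j < a
      rcases lt_or_gt_of_ne (pi_ne π (ne_of_lt hja')) with h1 | h1
      · exact h123 (has123_intro π hja' hab h1 hvab)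
      · exact h2143 (has2143_intro π hja' hab (hbc.trans hcd) h1 hjd'
          (hvda.trans hvab))
    · exact hja hja'
    · -- a < j
      rcases lt_trichotomy j b with hjb' | hjb' | hjb'
      · -- a < j < b
        rcases lt_or_gt_of_ne (pi_ne π (ne_of_lt hja')) with h1 | h1
        · rcases lt_or_gt_of_ne (pi_ne π (ne_of_lt hjb')) with h2 | h2
          · exact h123 (has123_intro π hja' hjb' h1 h2)
          · exact absurd (hjd'.trans (hvda.trans (hvab.trans h2))) (lt_irrefl _)
        · -- π j < π a : bridge (j, b)
          have hvjb : π j < π b := hjd'.trans (hvda.trans hvab)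
          have hu' : u.val = {b, a} := by rw [hu, Finset.pair_comm]
          have hw3 : (mkV π hjb' hvjb).val = {b, j} := by
            rw [mkV_val, Finset.pair_comm]
          have had1 : (OccGraph (Equiv.refl (Fin 2)) π).Adj u (mkV π hjb' hvjb) :=
            adj_of π hu' hw3 (ne_of_lt hab) (ne_of_lt hjb') (ne_of_lt hja')
          have had2 : (OccGraph (Equiv.refl (Fin 2)) π).Adj (mkV π hjb' hvjb)
              (mkV π hjltd hjd') :=
            adj_of π rfl rfl (ne_of_gt hjb') (ne_of_gt hjltd)
              (ne_of_lt (hbc.trans hcd))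
          exact hnr2 (had1.reachable.trans had2.reachable)
      · exact hjb hjb'
      · -- b < j < c : new quad (a, b, j, d)
        rcases lt_or_gt_of_ne (pi_ne π (ne_of_lt (hab.trans hjb'))) with h1 | h1
        · exact h123 (has123_intro π (hab.trans hjb') hjltd h1 hjd')
        · have hmem : (a, b, j, d) ∈ Bad := Finset.mem_filter.mpr
            ⟨Finset.mem_univ _, hab, hjb', hjltd, hjd', hvda, hvab,
              u, mkV π hjltd hjd', hu, rfl, hnr2⟩
          have hkey := hzmin _ hmem
          simp only at hkey
          have hjcv : j.val < c.val := hjc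
          omega
  · -- right violation : ∃ j > c, j ≠ d, π d < π j
    push_neg at hs
    obtain ⟨j, hcj, hjd, hdjle⟩ := hs
    have hdj' : π d < π j := lt_of_le_of_ne hdjle (pi_ne π hjd.symm)
    have hvcj : π c < π j := hvcd.trans hdj'
    have hadjv : (OccGraph (Equiv.refl (Fin 2)) π).Adj v (mkV π hcj hvcj) :=
      adj_of π hv rfl (ne_of_gt hcd) (ne_of_gt hcj) hjd.symm
    have hnr2 : ¬ (OccGraph (Equiv.refl (Fin 2)) π).Reachable u (mkV π hcj hvcj) :=
      fun h => hnr (h.trans hadjv.symm.reachable)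
    have hbj : b < j := hbc.trans hcj
    rcases lt_or_gt_of_ne (pi_ne π (ne_of_lt (hab.trans hbj))) with h1 | h1
    · -- π a < π j
      rcases lt_or_gt_of_ne (pi_ne π (ne_of_lt hbj)) with h2 | h2
      · exact h123 (has123_intro π hab hbj hvab h2)
      · -- π j < π b : bridge (a, j)
        have had1 : (OccGraph (Equiv.refl (Fin 2)) π).Adj u
            (mkV π (hab.trans hbj) h1) :=
          adj_of π hu rfl (ne_of_gt hab) (ne_of_gt (hab.trans hbj)) (ne_of_lt hbj)
        have hw3 : (mkV π (hab.trans hbj) h1).val = {j, a} := by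
          rw [mkV_val, Finset.pair_comm]
        have hw2 : (mkV π hcj hvcj).val = {j, c} := by
          rw [mkV_val, Finset.pair_comm]
        have had2 : (OccGraph (Equiv.refl (Fin 2)) π).Adj
            (mkV π (hab.trans hbj) h1) (mkV π hcj hvcj) :=
          adj_of π hw3 hw2 (ne_of_lt (hab.trans hbj)) (ne_of_lt hcj)
            (ne_of_lt (hab.trans hbc))
        exact hnr2 (had1.reachable.trans had2.reachable)
    · -- π j < π a : new quad (a, b, c, j)
      have hmem : (a, b, c, j) ∈ Bad := Finset.mem_filter.mpr
        ⟨Finset.mem_univ _, hab, hbc, hcj, hvcj, h1, hvab,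
          u, mkV π hcj hvcj, hu, rfl, hnr2⟩
      have hkey := hzmin _ hmem
      simp only at hkey
      have hdjv : (π d).val < (π j).val := hdj'
      have hjlt : (π j).val < n := (π j).isLt
      have hmul : (n - (π j).val) * n < (n - (π d).val) * n :=
        mul_lt_mul_of_pos_right (by omega) hn
      omega
end Dev8
section Dev9
open SimpleGraph
variable {n : ℕ} (π : Equiv.Perm (Fin n))

theorem occ_connected
    (h12 : PermContains π (Equiv.refl (Fin 2)))
    (h123 : ¬ PermContains π (Equiv.refl (Fin 3)))
    (h2143 : ¬ PermContains π perm2143)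
    (hmesh : ¬ MeshOccurs π) :
    (OccGraph (Equiv.refl (Fin 2)) π).Connected := by
  rw [connected_iff]
  constructor
  · intro u v
    by_contra hnr
    obtain ⟨a, b, hab, hvab, hu⟩ := vert_rep π u
    obtain ⟨c, d, hcd, hvcd, hv⟩ := vert_rep π v
    rcases lt_trichotomy a c with hac | hac | hac
    · obtain ⟨hbc, hvda⟩ :=
        quad_of_unreachable π h123 h2143 hu hv hab hcd hvab hvcd hac hnr
      exact no_bad_quad π h123 h2143 hmesh hab hbc hcd hvcd hvda hvab hu hv hnr
    · exact (unreach_ne π hu hv hab hcd hnr).1 hac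
    · have hnr' : ¬ (OccGraph (Equiv.refl (Fin 2)) π).Reachable v u :=
        fun h => hnr h.symm
      obtain ⟨hda, hvbc⟩ :=
        quad_of_unreachable π h123 h2143 hv hu hcd hab hvcd hvab hac hnr'
      exact no_bad_quad π h123 h2143 hmesh hcd hda hab hvab hvbc hvcd hv hu hnr'
  · obtain ⟨i, j, hij, hvij⟩ := has12_elim π h12
    exact ⟨mkV π hij hvij⟩

lemma mesh_disconnected (h : MeshOccurs π) :
    ¬ (OccGraph (Equiv.refl (Fin 2)) π).Connected := by
  obtain ⟨i1, i2, i3, i4, h12, h23, h34, v34, v41, v12, s1, s2⟩ := h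
  intro hconn
  set U := mkV π h12 v12 with hU
  set W := mkV π h34 v34 with hW
  set P : Vtx π → Prop := fun o => ∀ x ∈ o.val, x < i3 with hP
  have step : ∀ {o o' : Vtx π}, (OccGraph (Equiv.refl (Fin 2)) π).Adj o o' →
      P o → P o' := by
    intro o o' hadj hAo
    obtain ⟨k, l, hkl, hvkl, ho'⟩ := vert_rep π o'
    by_contra hno
    simp only [hP, not_forall] at hno
    obtain ⟨z, hzmem, hz3⟩ := hno
    have hz3' : i3 ≤ z := not_lt.mp hz3
    obtain ⟨x, hxo, hxo'⟩ := adj_shared π hadj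
    have hx3 : x < i3 := hAo x hxo
    rw [ho'] at hxo' hzmem
    simp only [Finset.mem_insert, Finset.mem_singleton] at hxo' hzmem
    -- x < i3 ≤ z, x,z ∈ {k,l}, k < l  ⇒  k = x, l = z
    have hkx : k < i3 ∧ i3 ≤ l := by
      rcases hxo' with rfl | rfl <;> rcases hzmem with rfl | rfl
      · exact absurd (lt_of_lt_of_le hx3 hz3') (lt_irrefl _)
      · exact ⟨hx3, hz3'⟩
      · exact absurd (hkl.trans hx3) (not_lt.mpr hz3')
      · exact absurd (lt_of_lt_of_le hx3 hz3') (lt_irrefl _)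
    obtain ⟨hk3, hl3⟩ := hkx
    have hklarge : π i4 < π k := by
      by_cases hk1 : k = i1
      · rw [hk1]; exact v41
      by_cases hk2 : k = i2
      · rw [hk2]; exact v41.trans v12
      exact s1 k hk3 hk1 hk2
    rcases lt_or_eq_of_le hl3 with hl3' | hl3'
    · by_cases hl4 : l = i4
      · rw [hl4] at hvkl; exact absurd (hklarge.trans hvkl) (lt_irrefl _)
      · exact absurd (((s2 l hl3' hl4).trans hklarge).trans hvkl) (lt_irrefl _)
    · rw [← hl3'] at hvkl
      exact absurd ((hvkl.trans v34).trans hklarge) (lt_irrefl _)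
  have hwalk : ∀ {x' y' : Vtx π} (p : (OccGraph (Equiv.refl (Fin 2)) π).Walk x' y'),
      P x' → P y' := by
    intro x' y' p
    induction p with
    | nil => exact id
    | cons h q ih => exact fun hp => ih (step h hp)
  obtain ⟨p⟩ := hconn.preconnected U W
  have hPU : P U := by
    intro x hx
    simp only [hU, mkV_val, Finset.mem_insert, Finset.mem_singleton] at hx
    rcases hx with rfl | rfl
    · exact h12.trans h23
    · exact h23
  have hPW := hwalk p hPU
  have : i3 ∈ W.val := by simp [hW]
  exact absurd (hPW i3 this) (lt_irrefl _)

end Dev9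
theorem tree_iff (n : ℕ) (π : Equiv.Perm (Fin n)) :
    (OccGraph (Equiv.refl (Fin 2)) π).IsTree ↔
      (PermContains π (Equiv.refl (Fin 2)) ∧
       ¬ PermContains π (Equiv.refl (Fin 3)) ∧
       ¬ PermContains π perm1432 ∧
       ¬ PermContains π perm2143 ∧
       ¬ PermContains π perm3214 ∧
       ¬ MeshOccurs π) := by
  rw [SimpleGraph.isTree_iff]
  constructor
  · rintro ⟨hconn, hacyc⟩
    refine ⟨?_, ?_, ?_, ?_, ?_, ?_⟩
    · -- contains 12
      obtain ⟨o⟩ := hconn.nonempty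
      obtain ⟨i, j, hij, hv, -⟩ := vert_rep π o
      exact has12_intro π hij hv
    · -- avoids 123
      intro hc
      obtain ⟨i, j, k, hij, hjk, v1, v2⟩ := has123_elim π hc
      have hUval : (mkV π hij v1).val = {j, i} := by rw [mkV_val, Finset.pair_comm]
      have hadj1 : (OccGraph (Equiv.refl (Fin 2)) π).Adj (mkV π hij v1)
          (mkV π hjk v2) :=
        adj_of π hUval rfl (ne_of_lt hij) (ne_of_gt hjk) (ne_of_lt (hij.trans hjk))
      have hV2val : (mkV π hjk v2).val = {k, j} := by rw [mkV_val, Finset.pair_comm]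
      have hWval : (mkV π (hij.trans hjk) (v1.trans v2)).val = {k, i} := by
        rw [mkV_val, Finset.pair_comm]
      have hadj2 : (OccGraph (Equiv.refl (Fin 2)) π).Adj (mkV π hjk v2)
          (mkV π (hij.trans hjk) (v1.trans v2)) :=
        adj_of π hV2val hWval (ne_of_lt hjk) (ne_of_lt (hij.trans hjk))
          (ne_of_gt hij)
      have hadj3 : (OccGraph (Equiv.refl (Fin 2)) π).Adj
          (mkV π (hij.trans hjk) (v1.trans v2)) (mkV π hij v1) :=
        adj_of π rfl rfl (ne_of_gt (hij.trans hjk)) (ne_of_gt hij)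
          (ne_of_gt hjk)
      exact not_acyclic_triangle hadj1 hadj2 hadj3 hacyc
    · -- avoids 1432
      intro hc
      obtain ⟨i1, i2, i3, i4, h12, h23, h34, v1, v2, v3⟩ := has1432_elim π hc
      have w1 : π i1 < π i2 := (v1.trans v2).trans v3
      have w2 : π i1 < π i3 := v1.trans v2
      have hadj1 : (OccGraph (Equiv.refl (Fin 2)) π).Adj (mkV π h12 w1)
          (mkV π (h12.trans h23) w2) :=
        adj_of π rfl rfl (ne_of_gt h12) (ne_of_gt (h12.trans h23)) (ne_of_lt h23)
      have hadj2 : (OccGraph (Equiv.refl (Fin 2)) π).Adj (mkV π (h12.trans h23) w2)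
          (mkV π ((h12.trans h23).trans h34) v1) :=
        adj_of π rfl rfl (ne_of_gt (h12.trans h23))
          (ne_of_gt ((h12.trans h23).trans h34)) (ne_of_lt h34)
      have hadj3 : (OccGraph (Equiv.refl (Fin 2)) π).Adj
          (mkV π ((h12.trans h23).trans h34) v1) (mkV π h12 w1) :=
        adj_of π rfl rfl (ne_of_gt ((h12.trans h23).trans h34)) (ne_of_gt h12)
          (ne_of_gt (h23.trans h34))
      exact not_acyclic_triangle hadj1 hadj2 hadj3 hacyc
    · -- avoids 2143
      intro hc
      obtain ⟨i1, i2, i3, i4, h12, h23, h34, v1, v2, v3⟩ := has2143_elim π hc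
      have wA : π i1 < π i3 := v2.trans v3
      have wC : π i2 < π i4 := v1.trans v2
      have wD : π i2 < π i3 := v1.trans wA
      have h13 : i1 < i3 := h12.trans h23
      have h14 : i1 < i4 := h13.trans h34
      have h24 : i2 < i4 := h23.trans h34
      have hBval : (mkV π h14 v2).val = {i4, i1} := by rw [mkV_val, Finset.pair_comm]
      have hCval : (mkV π h24 wC).val = {i4, i2} := by rw [mkV_val, Finset.pair_comm]
      have hDval : (mkV π h23 wD).val = {i3, i2} := by rw [mkV_val, Finset.pair_comm]
      have hAval : (mkV π h13 wA).val = {i3, i1} := by rw [mkV_val, Finset.pair_comm]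
      have hadj1 : (OccGraph (Equiv.refl (Fin 2)) π).Adj (mkV π h13 wA)
          (mkV π h14 v2) :=
        adj_of π rfl rfl (ne_of_gt h13) (ne_of_gt h14) (ne_of_lt h34)
      have hadj2 : (OccGraph (Equiv.refl (Fin 2)) π).Adj (mkV π h14 v2)
          (mkV π h24 wC) :=
        adj_of π hBval hCval (ne_of_lt h14) (ne_of_lt h24) (ne_of_lt h12)
      have hadj3 : (OccGraph (Equiv.refl (Fin 2)) π).Adj (mkV π h24 wC)
          (mkV π h23 wD) :=
        adj_of π rfl rfl (ne_of_gt h24) (ne_of_gt h23) (ne_of_gt h34)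
      have hadj4 : (OccGraph (Equiv.refl (Fin 2)) π).Adj (mkV π h23 wD)
          (mkV π h13 wA) :=
        adj_of π hDval hAval (ne_of_lt h23) (ne_of_lt h13) (ne_of_gt h12)
      have hAC : (mkV π h13 wA) ≠ (mkV π h24 wC) :=
        ne_of_val_pairs π rfl rfl (ne_of_gt h23) (ne_of_lt h34)
      have hBD : (mkV π h14 v2) ≠ (mkV π h23 wD) :=
        ne_of_val_pairs π rfl rfl (ne_of_gt h24) (ne_of_gt h34)
      exact not_acyclic_square hadj1 hadj2 hadj3 hadj4 hAC hBD hacyc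
    · -- avoids 3214
      intro hc
      obtain ⟨i1, i2, i3, i4, h12, h23, h34, v1, v2, v3⟩ := has3214_elim π hc
      have w1 : π i2 < π i4 := v2.trans v3
      have w2 : π i3 < π i4 := (v1.trans v2).trans v3
      have hAval : (mkV π ((h12.trans h23).trans h34) v3).val = {i4, i1} := by
        rw [mkV_val, Finset.pair_comm]
      have hBval : (mkV π ((h23.trans h34)) w1).val = {i4, i2} := by
        rw [mkV_val, Finset.pair_comm]
      have hCval : (mkV π h34 w2).val = {i4, i3} := by
        rw [mkV_val, Finset.pair_comm]
      have hadj1 : (OccGraph (Equiv.refl (Fin 2)) π).Adj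
          (mkV π ((h12.trans h23).trans h34) v3) (mkV π (h23.trans h34) w1) :=
        adj_of π hAval hBval (ne_of_lt ((h12.trans h23).trans h34))
          (ne_of_lt (h23.trans h34)) (ne_of_lt h12)
      have hadj2 : (OccGraph (Equiv.refl (Fin 2)) π).Adj
          (mkV π (h23.trans h34) w1) (mkV π h34 w2) :=
        adj_of π hBval hCval (ne_of_lt (h23.trans h34)) (ne_of_lt h34)
          (ne_of_lt h23)
      have hadj3 : (OccGraph (Equiv.refl (Fin 2)) π).Adj
          (mkV π h34 w2) (mkV π ((h12.trans h23).trans h34) v3) :=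
        adj_of π hCval hAval (ne_of_lt h34) (ne_of_lt ((h12.trans h23).trans h34))
          (ne_of_gt (h12.trans h23))
      exact not_acyclic_triangle hadj1 hadj2 hadj3 hacyc
    · -- avoids the mesh pattern
      intro hc
      exact mesh_disconnected π hc hconn
  · rintro ⟨h12, h123, h1432, h2143, h3214, hmesh⟩
    exact ⟨occ_connected π h12 h123 h2143 hmesh,
      occ_acyclic π h123 h1432 h2143 h3214⟩
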